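/- Let D ⊆ [0,1] be almost full and let f : D → ℝ be tag-Riemann integrable with some integral A. Then the associated step functions form a Cauchy net in the L¹ sense: for every ε > 0 there exists M ∈ ℕ such that for all m′, m″ ≥ M and all tag systems ζ′ of depth m′ and ζ″ of depth m″ for D, one has ∫₀¹ |S(ζ′)(x) − S(ζ″)(x)| dx < ε. -/

import Mathlib

open MeasureTheory Filter Set

noncomputable section

/-- A sequence of functions on `[0,1]` is *regular* if each member is continuous and
nonnegative on `[0,1]` and has integral over `[0,1]` strictly less than `2⁻ⁿ`. -/
def RegularSeq (h : ℕ → ℝ → ℝ) : Prop :=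
  ∀ n : ℕ, ContinuousOn (h n) (Set.Icc 0 1) ∧
    (∀ x ∈ Set.Icc (0:ℝ) 1, 0 ≤ h n x) ∧
    (∫ x in (0:ℝ)..1, h n x) < (1/2 : ℝ) ^ n

/-- The set `Ω(𝔥)` of points of `[0,1]` at which the partial sums of `∑ hₙ(x)` are
bounded above. -/
def Omega (h : ℕ → ℝ → ℝ) : Set ℝ :=
  {x ∈ Set.Icc (0:ℝ) 1 | ∃ γ : ℝ, ∀ m : ℕ, ∑ n ∈ Finset.range (m+1), h n x ≤ γ}

/-- A subset `X ⊆ [0,1]` is *almost full* if `Ω(𝔥) ⊆ X` for some regular sequence `𝔥`. -/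
def AlmostFull (X : Set ℝ) : Prop :=
  ∃ h : ℕ → ℝ → ℝ, RegularSeq h ∧ Omega h ⊆ X

/-- A *tag system of depth `m` for `D`*: a choice of a point of `I_{l,m} ∩ D` for each
dyadic interval `I_{l,m} = (l·2⁻ᵐ, (l+1)·2⁻ᵐ)`, `0 ≤ l < 2ᵐ`. -/
def IsTagSystem (D : Set ℝ) (m : ℕ) (ζ : ℕ → ℝ) : Prop :=
  ∀ l : ℕ, l < 2^m → ζ l ∈ Set.Ioo ((l : ℝ) / 2^m) (((l : ℝ) + 1) / 2^m) ∩ D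

/-- The Riemann sum of `f` associated with a tag system of depth `m`. -/
def RiemannSum (f : ℝ → ℝ) (m : ℕ) (ζ : ℕ → ℝ) : ℝ :=
  ∑ l ∈ Finset.range (2^m), (1/2 : ℝ)^m * f (ζ l)

/-- `f : D → ℝ` is *tag-Riemann integrable with integral `A`* if the Riemann sums over
all tag systems of sufficiently large depth are arbitrarily close to `A`. -/
def TagRiemannIntegrable (D : Set ℝ) (f : ℝ → ℝ) (A : ℝ) : Prop :=
  ∀ ε > (0:ℝ), ∃ M : ℕ, ∀ m ≥ M, ∀ ζ : ℕ → ℝ, IsTagSystem D m ζ →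
    |RiemannSum f m ζ - A| < ε

/-- The step function associated with a tag system of depth `m`. -/
def StepFun (f : ℝ → ℝ) (m : ℕ) (ζ : ℕ → ℝ) : ℝ → ℝ :=
  fun x => ∑ l ∈ Finset.range (2^m),
    Set.indicator (Set.Ioo ((l : ℝ) / 2^m) (((l : ℝ) + 1) / 2^m)) (fun _ => f (ζ l)) x

/- ### Auxiliary lemmas -/

lemma dyadic_notmem {m l l' : ℕ} {x : ℝ}
    (hx : x ∈ Set.Ioo ((l : ℝ) / 2^m) (((l : ℝ) + 1) / 2^m)) (hne : l' ≠ l) :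
    x ∉ Set.Ioo ((l' : ℝ) / 2^m) (((l' : ℝ) + 1) / 2^m) := by
  intro hx'
  have h2 : (0:ℝ) < 2^m := by positivity
  rcases lt_or_gt_of_ne hne with hlt | hgt
  · have h1 : ((l':ℝ) + 1) ≤ (l:ℝ) := by exact_mod_cast hlt
    have h3 : ((l':ℝ)+1)/2^m ≤ (l:ℝ)/2^m := by gcongr
    have := hx.1; have := hx'.2; linarith
  · have h1 : ((l:ℝ) + 1) ≤ (l':ℝ) := by exact_mod_cast hgt
    have h3 : ((l:ℝ)+1)/2^m ≤ (l':ℝ)/2^m := by gcongr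
    have := hx.2; have := hx'.1; linarith

lemma sum_indicator_eval (c : ℕ → ℝ) {m l : ℕ} (hl : l < 2^m) {x : ℝ}
    (hx : x ∈ Set.Ioo ((l : ℝ) / 2^m) (((l : ℝ) + 1) / 2^m)) :
    (∑ l' ∈ Finset.range (2^m),
      Set.indicator (Set.Ioo ((l' : ℝ) / 2^m) (((l' : ℝ) + 1) / 2^m)) (fun _ => c l') x)
      = c l := by
  rw [Finset.sum_eq_single_of_mem l (Finset.mem_range.mpr hl)]
  · exact Set.indicator_of_mem hx _
  · intro l' _ hne
    exact Set.indicator_of_notMem (dyadic_notmem hx hne) _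

lemma dyadic_subset {m' m'' : ℕ} (h : m' ≤ m'') {i j : ℕ} (hj : j < 2^(m''-m')) :
    Set.Ioo (((i * 2^(m''-m') + j : ℕ) : ℝ) / 2^m'')
        ((((i * 2^(m''-m') + j : ℕ) : ℝ) + 1) / 2^m'')
      ⊆ Set.Ioo ((i : ℝ) / 2^m') (((i : ℝ) + 1) / 2^m') := by
  have hpow : (2:ℝ)^m'' = 2^m' * 2^(m''-m') := by
    rw [← pow_add]; congr 1; omega
  have h2 : (0:ℝ) < 2^m' := by positivity
  have hK : (0:ℝ) < 2^(m''-m') := by positivity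
  have h2'' : (0:ℝ) < 2^m'' := by positivity
  have hj' : (j:ℝ) + 1 ≤ 2^(m''-m') := by
    exact_mod_cast Nat.succ_le_of_lt hj
  apply Set.Ioo_subset_Ioo
  · rw [div_le_div_iff₀ h2 h2'']
    push_cast
    rw [hpow]; nlinarith [Nat.cast_nonneg (α := ℝ) j]
  · rw [div_le_div_iff₀ h2'' h2]
    push_cast
    rw [hpow]; nlinarith [Nat.cast_nonneg (α := ℝ) i]

lemma sum_range_mul' {a b : ℕ} (t : ℕ → ℝ) :
    ∑ l ∈ Finset.range (a*b), t l
      = ∑ i ∈ Finset.range a, ∑ j ∈ Finset.range b, t (i*b+j) := by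
  induction a with
  | zero => simp
  | succ n ih =>
      rw [Nat.succ_mul, Finset.sum_range_add, ih, Finset.sum_range_succ]

lemma same_depth {D : Set ℝ} {f : ℝ → ℝ} {A ε : ℝ} {M : ℕ}
    (hM : ∀ m ≥ M, ∀ ζ : ℕ → ℝ, IsTagSystem D m ζ → |RiemannSum f m ζ - A| < ε)
    {m : ℕ} (hm : m ≥ M) {ζ ξ : ℕ → ℝ}
    (hζ : IsTagSystem D m ζ) (hξ : IsTagSystem D m ξ) :
    ∑ l ∈ Finset.range (2^m), (1/2:ℝ)^m * |f (ζ l) - f (ξ l)| < 2 * ε := by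
  classical
  set η₁ : ℕ → ℝ := fun l => if f (ξ l) ≤ f (ζ l) then ζ l else ξ l with hη₁
  set η₂ : ℕ → ℝ := fun l => if f (ξ l) ≤ f (ζ l) then ξ l else ζ l with hη₂
  have h₁ : IsTagSystem D m η₁ := by
    intro l hl; simp only [hη₁]
    split
    · exact hζ l hl
    · exact hξ l hl
  have h₂ : IsTagSystem D m η₂ := by
    intro l hl; simp only [hη₂]
    split
    · exact hξ l hl
    · exact hζ l hl
  have key : ∑ l ∈ Finset.range (2^m), (1/2:ℝ)^m * |f (ζ l) - f (ξ l)|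
      = RiemannSum f m η₁ - RiemannSum f m η₂ := by
    rw [RiemannSum, RiemannSum, ← Finset.sum_sub_distrib]
    refine Finset.sum_congr rfl fun l _ => ?_
    simp only [hη₁, hη₂]
    by_cases hc : f (ξ l) ≤ f (ζ l)
    · simp only [if_pos hc]
      rw [abs_of_nonneg (by linarith)]; ring
    · simp only [if_neg hc]
      rw [abs_of_neg (by simp at hc; linarith)]; ring
  have a1 := abs_lt.mp (hM m hm η₁ h₁)
  have a2 := abs_lt.mp (hM m hm η₂ h₂)
  rw [key]; linarith [a1.1, a1.2, a2.1, a2.2]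

lemma integral_eq (f : ℝ → ℝ) {m' m'' : ℕ} (h : m' ≤ m'') (ζ' ζ'' : ℕ → ℝ) :
    (∫ x in (0:ℝ)..1, |StepFun f m' ζ' x - StepFun f m'' ζ'' x|)
      = ∑ l ∈ Finset.range (2^m''),
          (1/2:ℝ)^m'' * |f (ζ' (l / 2^(m''-m'))) - f (ζ'' l)| := by
  classical
  have h01 : (0:ℝ) ≤ 1 := by norm_num
  have hK0 : 0 < 2^(m''-m') := Nat.pow_pos (by norm_num)
  have hpowN : (2:ℕ)^m'' = 2^m' * 2^(m''-m') := by rw [← pow_add]; congr 1; omega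
  set c : ℕ → ℝ := fun l => |f (ζ' (l / 2^(m''-m'))) - f (ζ'' l)| with hc
  set T : ℝ → ℝ := fun x => ∑ l ∈ Finset.range (2^m''),
      Set.indicator (Set.Ioo ((l : ℝ) / 2^m'') (((l : ℝ) + 1) / 2^m''))
        (fun _ => c l) x with hT
  have h2'' : (0:ℝ) < 2^m'' := by positivity
  have hN : volume (Set.range (fun k : ℕ => (k:ℝ)/2^m'')) = 0 :=
    Set.Countable.measure_zero (Set.countable_range _) _
  have hae : (fun x => |StepFun f m' ζ' x - StepFun f m'' ζ'' x|)
      =ᵐ[volume.restrict (Set.Ioc (0:ℝ) 1)] T := by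
    have h0 : ∀ᵐ x ∂(volume : Measure ℝ),
        x ∉ Set.range (fun k : ℕ => (k:ℝ)/2^m'') := compl_mem_ae_iff.mpr hN
    filter_upwards [ae_restrict_of_ae h0, ae_restrict_mem measurableSet_Ioc]
      with x hx1 hx2
    set l : ℕ := ⌊x * 2^m''⌋₊ with hldef
    have hxpos : 0 < x * 2^m'' := mul_pos hx2.1 h2''
    have hne1 : x * 2^m'' ≠ ((2^m'' : ℕ) : ℝ) := by
      intro hcontra
      refine hx1 ⟨2^m'', ?_⟩
      show ((2^m'' : ℕ) : ℝ) / 2^m'' = x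
      rw [div_eq_iff (ne_of_gt h2'')]; linarith
    have hle : x * 2^m'' ≤ ((2^m'' : ℕ) : ℝ) := by
      push_cast; nlinarith [hx2.2]
    have hlt2 : x * 2^m'' < ((2^m'' : ℕ) : ℝ) := lt_of_le_of_ne hle hne1
    have hl : l < 2^m'' := by
      rw [hldef]; exact (Nat.floor_lt (le_of_lt hxpos)).mpr hlt2
    have hfloor_le : (l : ℝ) ≤ x * 2^m'' := Nat.floor_le (le_of_lt hxpos)
    have hfloor_ne : (l : ℝ) ≠ x * 2^m'' := by
      intro hcontra
      refine hx1 ⟨l, ?_⟩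
      show ((l : ℕ) : ℝ) / 2^m'' = x
      rw [div_eq_iff (ne_of_gt h2'')]; linarith
    have hxI : x ∈ Set.Ioo ((l : ℝ) / 2^m'') (((l : ℝ) + 1) / 2^m'') := by
      constructor
      · rw [div_lt_iff₀ h2'']; exact lt_of_le_of_ne hfloor_le hfloor_ne
      · rw [lt_div_iff₀ h2'']; exact Nat.lt_floor_add_one _
    have hS'' : StepFun f m'' ζ'' x = f (ζ'' l) :=
      sum_indicator_eval (fun l' => f (ζ'' l')) hl hxI
    have hdm : l / 2^(m''-m') < 2^m' :=
      Nat.div_lt_of_lt_mul (by rw [Nat.mul_comm, ← hpowN]; exact hl)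
    have hrew : l / 2^(m''-m') * 2^(m''-m') + l % 2^(m''-m') = l :=
      Nat.div_add_mod' l _
    have hxI' : x ∈ Set.Ioo (((l / 2^(m''-m') : ℕ) : ℝ) / 2^m')
        ((((l / 2^(m''-m') : ℕ) : ℝ) + 1) / 2^m') := by
      apply dyadic_subset h (Nat.mod_lt _ hK0) (i := l / 2^(m''-m')) (j := l % 2^(m''-m'))
      rw [hrew]; exact hxI
    have hS' : StepFun f m' ζ' x = f (ζ' (l / 2^(m''-m'))) :=
      sum_indicator_eval (fun i => f (ζ' i)) hdm hxI'
    have hTx : T x = c l := sum_indicator_eval c hl hxI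
    rw [hS', hS'', hTx]
  rw [intervalIntegral.integral_of_le h01, integral_congr_ae hae, hT]
  rw [MeasureTheory.integral_finset_sum _ (fun i _ =>
    (MeasureTheory.Integrable.indicator
      (MeasureTheory.integrableOn_const measure_Ioc_lt_top.ne)
      measurableSet_Ioo))]
  refine Finset.sum_congr rfl fun l hl => ?_
  have hl' := Finset.mem_range.mp hl
  have hsub : Set.Ioo ((l:ℝ)/2^m'') (((l:ℝ)+1)/2^m'') ⊆ Set.Ioc (0:ℝ) 1 := by
    intro y hy
    have h0le : (0:ℝ) ≤ (l:ℝ)/2^m'' := by positivity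
    have hub : ((l:ℝ)+1)/2^m'' ≤ 1 := by
      rw [div_le_one h2'']
      have : ((l:ℕ):ℝ)+1 ≤ ((2^m'' : ℕ):ℝ) := by exact_mod_cast Nat.succ_le_of_lt hl'
      simpa using this
    exact ⟨lt_of_le_of_lt h0le hy.1, le_trans (le_of_lt hy.2) hub⟩
  rw [MeasureTheory.setIntegral_indicator measurableSet_Ioo,
      Set.inter_eq_right.mpr hsub, MeasureTheory.setIntegral_const, measureReal_def, Real.volume_Ioo]
  have hba : ((l:ℝ)+1)/2^m'' - (l:ℝ)/2^m'' = (1/2:ℝ)^m'' := by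
    field_simp
    rw [← mul_pow]; norm_num
  rw [ENNReal.toReal_ofReal (by rw [hba]; positivity), hba, smul_eq_mul]

lemma key_le {D : Set ℝ} {f : ℝ → ℝ} {A ε : ℝ} {M : ℕ}
    (hM : ∀ m ≥ M, ∀ ζ : ℕ → ℝ, IsTagSystem D m ζ → |RiemannSum f m ζ - A| < ε)
    {m' m'' : ℕ} (hm' : m' ≥ M) (hle : m' ≤ m'')
    {ζ' ζ'' : ℕ → ℝ} (hζ' : IsTagSystem D m' ζ') (hζ'' : IsTagSystem D m'' ζ'') :
    (∫ x in (0:ℝ)..1, |StepFun f m' ζ' x - StepFun f m'' ζ'' x|) < 2 * ε := by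
  classical
  have hK0 : 0 < 2^(m''-m') := Nat.pow_pos (by norm_num)
  have hpowN : (2:ℕ)^m'' = 2^m' * 2^(m''-m') := by rw [← pow_add]; congr 1; omega
  rw [integral_eq f hle ζ' ζ'', hpowN, sum_range_mul', Finset.sum_comm]
  have hdiv : ∀ i j : ℕ, j < 2^(m''-m') → (i * 2^(m''-m') + j) / 2^(m''-m') = i := by
    intro i j hj
    rw [Nat.mul_comm, Nat.mul_add_div hK0, Nat.div_eq_of_lt hj, Nat.add_zero]
  have hpowR : (1/2:ℝ)^m'' = (1/2:ℝ)^(m''-m') * (1/2:ℝ)^m' := by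
    rw [← pow_add]; congr 1; omega
  have hbound : ∀ j ∈ Finset.range (2^(m''-m')),
      (∑ i ∈ Finset.range (2^m'),
        (1/2:ℝ)^m'' * |f (ζ' ((i * 2^(m''-m') + j) / 2^(m''-m'))) - f (ζ'' (i * 2^(m''-m') + j))|)
      < (1/2:ℝ)^(m''-m') * (2 * ε) := by
    intro j hj
    have hj' := Finset.mem_range.mp hj
    have hξ : IsTagSystem D m' (fun i => ζ'' (i * 2^(m''-m') + j)) := by
      intro i hi
      have hlt : i * 2^(m''-m') + j < 2^m'' := by
        rw [hpowN]
        calc i * 2^(m''-m') + j < (i+1) * 2^(m''-m') := by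
              rw [Nat.add_mul, Nat.one_mul]; omega
          _ ≤ 2^m' * 2^(m''-m') := Nat.mul_le_mul_right _ (Nat.succ_le_of_lt hi)
      obtain ⟨hmem, hDmem⟩ := hζ'' (i * 2^(m''-m') + j) hlt
      exact ⟨dyadic_subset hle hj' hmem, hDmem⟩
    have hsd := same_depth hM hm' hζ' hξ
    calc (∑ i ∈ Finset.range (2^m'),
          (1/2:ℝ)^m'' * |f (ζ' ((i * 2^(m''-m') + j) / 2^(m''-m'))) - f (ζ'' (i * 2^(m''-m') + j))|)
        = (1/2:ℝ)^(m''-m') * ∑ i ∈ Finset.range (2^m'),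
            (1/2:ℝ)^m' * |f (ζ' i) - f (ζ'' (i * 2^(m''-m') + j))| := by
          rw [Finset.mul_sum]
          refine Finset.sum_congr rfl fun i _ => ?_
          rw [hdiv i j hj', hpowR]; ring
      _ < (1/2:ℝ)^(m''-m') * (2 * ε) := by
          apply mul_lt_mul_of_pos_left hsd (by positivity)
  calc (∑ j ∈ Finset.range (2^(m''-m')), ∑ i ∈ Finset.range (2^m'),
        (1/2:ℝ)^m'' * |f (ζ' ((i * 2^(m''-m') + j) / 2^(m''-m'))) - f (ζ'' (i * 2^(m''-m') + j))|)
      < ∑ _j ∈ Finset.range (2^(m''-m')), (1/2:ℝ)^(m''-m') * (2 * ε) :=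
        Finset.sum_lt_sum_of_nonempty (by simp [hK0.ne']) hbound
    _ = 2 * ε := by
        rw [Finset.sum_const, Finset.card_range, nsmul_eq_mul]
        have : ((2^(m''-m') : ℕ) : ℝ) * (1/2:ℝ)^(m''-m') = 1 := by
          push_cast
          rw [one_div, inv_pow, mul_inv_cancel₀ (by positivity)]
        calc ((2^(m''-m') : ℕ) : ℝ) * ((1/2:ℝ)^(m''-m') * (2 * ε))
            = (((2^(m''-m') : ℕ) : ℝ) * (1/2:ℝ)^(m''-m')) * (2 * ε) := by ring
          _ = 2 * ε := by rw [this, one_mul]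

/-- If `D ⊆ [0,1]` is almost full and `f : D → ℝ` is tag-Riemann integrable, then the
associated step functions form a Cauchy net in the `L¹` sense. -/
theorem stmt16 (D : Set ℝ) (hD : D ⊆ Set.Icc 0 1) (hfull : AlmostFull D)
    (f : ℝ → ℝ) (A : ℝ) (hf : TagRiemannIntegrable D f A) :
    ∀ ε > (0:ℝ), ∃ M : ℕ, ∀ m' ≥ M, ∀ m'' ≥ M, ∀ ζ' ζ'' : ℕ → ℝ,
      IsTagSystem D m' ζ' → IsTagSystem D m'' ζ'' →
      (∫ x in (0:ℝ)..1, |StepFun f m' ζ' x - StepFun f m'' ζ'' x|) < ε := by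
  intro ε hε
  obtain ⟨M, hM⟩ := hf (ε/2) (by linarith)
  refine ⟨M, ?_⟩
  intro m' hm' m'' hm'' ζ' ζ'' hζ' hζ''
  rcases le_total m' m'' with hle | hle
  · have := key_le hM hm' hle hζ' hζ''
    linarith
  · have h2 := key_le hM hm'' hle hζ'' hζ'
    have heq : (∫ x in (0:ℝ)..1, |StepFun f m' ζ' x - StepFun f m'' ζ'' x|)
        = ∫ x in (0:ℝ)..1, |StepFun f m'' ζ'' x - StepFun f m' ζ' x| := by
      apply intervalIntegral.integral_congr
      intro x _
      exact abs_sub_comm _ _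
    rw [heq]; linarith
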